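/- Let n ≥ 1, α = (α_1, …, α_{n+1}) ∈ ℝ^{n+1} with α_1 ≥ α_2 ≥ … ≥ α_{n+1}, β = (β_1, …, β_n) ∈ ℝ^n with β_1 ≥ β_2 ≥ … ≥ β_n, and t ∈ ℝ. Then r(t, α, β) = 0 if and only if t satisfies the interlacing condition, i.e., −α_{n+2−j} ≥ β_j + t ≥ −α_{n+1−j} for every j ∈ {1, …, n}. -/
import Mathlib


open Finset

lemma mono_aux (N : ℕ) (α : ℕ → ℝ)
    (h : ∀ k, 1 ≤ k → k + 1 ≤ N → α (k + 1) ≤ α k) :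
    ∀ a b, 1 ≤ a → a ≤ b → b ≤ N → α b ≤ α a := by
  intro a b ha
  induction b with
  | zero => intro hab _; exact absurd hab (by omega)
  | succ m ih =>
    intro hab hbN
    rcases Nat.lt_or_ge a (m + 1) with hlt | hge
    · have h1 : α (m + 1) ≤ α m := h m (by omega) (by omega)
      exact h1.trans (ih (by omega) (by omega))
    · have : a = m + 1 := by omega
      rw [this]

lemma sum_sign_ite (N m : ℕ) (hm : m ≤ N) :
    ∑ l ∈ Icc 1 N, (if l ≤ m then (1:ℝ) else -1) = 2 * m - N := by
  have h1 : ∀ l ∈ Icc 1 N, (if l ≤ m then (1:ℝ) else -1)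
      = 2 * (if l ≤ m then (1:ℝ) else 0) - 1 := by
    intro l _; split <;> norm_num
  rw [Finset.sum_congr rfl h1, Finset.sum_sub_distrib, ← Finset.mul_sum,
    Finset.sum_boole, Finset.sum_const]
  have h2 : (Icc 1 N).filter (fun l => l ≤ m) = Icc 1 m := by
    ext l; simp only [mem_filter, mem_Icc]; omega
  rw [h2]
  simp [Nat.card_Icc]

lemma sum_reflect (n : ℕ) (f : ℕ → ℝ) :
    ∑ l ∈ Icc 1 n, f (n + 1 - l) = ∑ l ∈ Icc 1 n, f l := by
  apply Finset.sum_nbij' (fun l => n + 1 - l) (fun l => n + 1 - l) <;>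
    (intros a ha; simp only [mem_Icc] at *) <;> first | omega | (congr 1; omega)

lemma rhs_coeff (N : ℕ) (α : ℕ → ℝ) :
    ∑ k ∈ Icc 1 N, ∑ l ∈ Ioc k N, (α k - α l)
      = ∑ k ∈ Icc 1 N, (((N - k : ℕ) : ℝ) - ((k - 1 : ℕ) : ℝ)) * α k := by
  have hIoc : ∀ k : ℕ, Ioc k N = (Icc 1 N).filter (fun l => k < l) := by
    intro k; ext l; simp only [mem_Ioc, mem_filter, mem_Icc]; omega
  have step1 : ∀ k ∈ Icc 1 N, ∑ l ∈ Ioc k N, (α k - α l)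
      = ((N - k : ℕ) : ℝ) * α k - ∑ l ∈ Icc 1 N, (if k < l then α l else 0) := by
    intro k hk
    rw [hIoc k, Finset.sum_filter]
    have : ∀ l ∈ Icc 1 N, (if k < l then α k - α l else 0)
        = (if k < l then α k else 0) - (if k < l then α l else 0) := by
      intro l _; split <;> ring
    rw [Finset.sum_congr rfl this, Finset.sum_sub_distrib]
    congr 1
    rw [← Finset.sum_filter, ← hIoc k, Finset.sum_const, Nat.card_Ioc]
    rw [nsmul_eq_mul]
  rw [Finset.sum_congr rfl step1, Finset.sum_sub_distrib]
  have swap : ∑ k ∈ Icc 1 N, ∑ l ∈ Icc 1 N, (if k < l then α l else 0)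
      = ∑ l ∈ Icc 1 N, ((l - 1 : ℕ) : ℝ) * α l := by
    rw [Finset.sum_comm]
    refine Finset.sum_congr rfl fun l hl => ?_
    simp only [mem_Icc] at hl
    rw [← Finset.sum_filter]
    have h3 : (Icc 1 N).filter (fun k => k < l) = Icc 1 (l - 1) := by
      ext k; simp only [mem_filter, mem_Icc]; omega
    rw [h3, Finset.sum_const, Nat.card_Icc, nsmul_eq_mul]
    norm_num
  rw [swap, ← Finset.sum_sub_distrib]
  exact Finset.sum_congr rfl fun k _ => by ring


/-- For `n ≥ 1`, `α = (α 1, …, α (n+1))`, `β = (β 1, …, β n)` and `t ∈ ℝ`,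
`r(t, α, β) = Σ_{l=1}^{n} Σ_{k=1}^{n+1} |t + α_k + β_l|
  − Σ_{1 ≤ k < l ≤ n+1} |α_k − α_l| − Σ_{1 ≤ k < l ≤ n} |β_k − β_l|`. -/
noncomputable def rfun (n : ℕ) (t : ℝ) (α β : ℕ → ℝ) : ℝ :=
  (∑ l ∈ Icc 1 n, ∑ k ∈ Icc 1 (n + 1), |t + α k + β l|)
    - (∑ k ∈ Icc 1 (n + 1), ∑ l ∈ Ioc k (n + 1), |α k - α l|)
    - (∑ k ∈ Icc 1 n, ∑ l ∈ Ioc k n, |β k - β l|)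

/-- Let `n ≥ 1`, `α_1 ≥ … ≥ α_{n+1}`, `β_1 ≥ … ≥ β_n`, and `t ∈ ℝ`.  Then
`r(t, α, β) = 0` iff `t` satisfies the interlacing condition
`−α_{n+2−j} ≥ β_j + t ≥ −α_{n+1−j}` for every `j ∈ {1, …, n}`. -/
theorem statement2 (n : ℕ) (hn : 1 ≤ n) (α β : ℕ → ℝ)
    (hα : ∀ k, 1 ≤ k → k ≤ n → α (k + 1) ≤ α k)
    (hβ : ∀ k, 1 ≤ k → k + 1 ≤ n → β (k + 1) ≤ β k)
    (t : ℝ) :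
    rfun n t α β = 0 ↔
      (∀ j, 1 ≤ j → j ≤ n →
        -α (n + 2 - j) ≥ β j + t ∧ β j + t ≥ -α (n + 1 - j)) := by
  have hαmono := mono_aux (n + 1) α (fun k h1 h2 => hα k h1 (by omega))
  have hβmono := mono_aux n β hβ
  -- abs removal on sorted sums
  have hA : ∑ k ∈ Icc 1 (n+1), ∑ l ∈ Ioc k (n+1), |α k - α l|
      = ∑ k ∈ Icc 1 (n+1), ∑ l ∈ Ioc k (n+1), (α k - α l) := by
    refine Finset.sum_congr rfl fun k hk => Finset.sum_congr rfl fun l hl => ?_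
    simp only [mem_Icc, mem_Ioc] at hk hl
    exact abs_of_nonneg (sub_nonneg.mpr (hαmono k l hk.1 (le_of_lt hl.1) hl.2))
  have hB : ∑ k ∈ Icc 1 n, ∑ l ∈ Ioc k n, |β k - β l|
      = ∑ k ∈ Icc 1 n, ∑ l ∈ Ioc k n, (β k - β l) := by
    refine Finset.sum_congr rfl fun k hk => Finset.sum_congr rfl fun l hl => ?_
    simp only [mem_Icc, mem_Ioc] at hk hl
    exact abs_of_nonneg (sub_nonneg.mpr (hβmono k l hk.1 (le_of_lt hl.1) hl.2))
  -- the key signed-sum identity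
  have s_col : ∀ l ∈ Icc 1 n, ∑ k ∈ Icc 1 (n+1),
      (if k + l ≤ n + 1 then (1:ℝ) else -1) = 2 * ((n + 1 - l : ℕ) : ℝ) - ((n+1 : ℕ) : ℝ) := by
    intro l hl
    simp only [mem_Icc] at hl
    have : ∀ k ∈ Icc 1 (n+1), (if k + l ≤ n + 1 then (1:ℝ) else -1)
        = (if k ≤ n + 1 - l then (1:ℝ) else -1) := by
      intro k hk; simp only [mem_Icc] at hk
      exact if_congr (by omega) rfl rfl
    rw [Finset.sum_congr rfl this, sum_sign_ite (n+1) (n+1-l) (by omega)]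
  have s_row : ∀ k ∈ Icc 1 (n+1), ∑ l ∈ Icc 1 n,
      (if k + l ≤ n + 1 then (1:ℝ) else -1) = 2 * ((n + 1 - k : ℕ) : ℝ) - ((n : ℕ) : ℝ) := by
    intro k hk
    simp only [mem_Icc] at hk
    have : ∀ l ∈ Icc 1 n, (if k + l ≤ n + 1 then (1:ℝ) else -1)
        = (if l ≤ n + 1 - k then (1:ℝ) else -1) := by
      intro l hl; simp only [mem_Icc] at hl
      exact if_congr (by omega) rfl rfl
    rw [Finset.sum_congr rfl this, sum_sign_ite n (n+1-k) (by omega)]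
  have key : ∑ l ∈ Icc 1 n, ∑ k ∈ Icc 1 (n+1),
        (if k + l ≤ n + 1 then (1:ℝ) else -1) * (t + α k + β l)
      = (∑ k ∈ Icc 1 (n+1), ∑ l ∈ Ioc k (n+1), (α k - α l))
        + (∑ k ∈ Icc 1 n, ∑ l ∈ Ioc k n, (β k - β l)) := by
    have expand : ∀ l ∈ Icc 1 n, ∑ k ∈ Icc 1 (n+1),
        (if k + l ≤ n + 1 then (1:ℝ) else -1) * (t + α k + β l)
        = (∑ k ∈ Icc 1 (n+1), (if k + l ≤ n + 1 then (1:ℝ) else -1) * t)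
          + (∑ k ∈ Icc 1 (n+1), (if k + l ≤ n + 1 then (1:ℝ) else -1) * α k)
          + (∑ k ∈ Icc 1 (n+1), (if k + l ≤ n + 1 then (1:ℝ) else -1) * β l) := by
      intro l _
      rw [← Finset.sum_add_distrib, ← Finset.sum_add_distrib]
      exact Finset.sum_congr rfl fun k _ => by ring
    rw [Finset.sum_congr rfl expand, Finset.sum_add_distrib, Finset.sum_add_distrib]
    have Tpart : ∑ l ∈ Icc 1 n, ∑ k ∈ Icc 1 (n+1),
        (if k + l ≤ n + 1 then (1:ℝ) else -1) * t = 0 := by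
      have e1 : ∀ l ∈ Icc 1 n, ∑ k ∈ Icc 1 (n+1),
          (if k + l ≤ n + 1 then (1:ℝ) else -1) * t
          = ((n + 1 - l : ℕ) : ℝ) * t - ((l : ℕ) : ℝ) * t := by
        intro l hl
        rw [← Finset.sum_mul, s_col l hl]
        simp only [mem_Icc] at hl
        have hc : ((n + 1 - l : ℕ) : ℝ) + ((l : ℕ) : ℝ) = ((n + 1 : ℕ) : ℝ) := by
          rw [← Nat.cast_add]; congr 1; omega
        rw [← hc]; ring
      rw [Finset.sum_congr rfl e1, Finset.sum_sub_distrib,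
        sum_reflect n (fun x => (x : ℝ) * t), sub_self]
    have Apart : ∑ l ∈ Icc 1 n, ∑ k ∈ Icc 1 (n+1),
        (if k + l ≤ n + 1 then (1:ℝ) else -1) * α k
        = ∑ k ∈ Icc 1 (n+1), ∑ l ∈ Ioc k (n+1), (α k - α l) := by
      rw [rhs_coeff (n+1) α, Finset.sum_comm]
      refine Finset.sum_congr rfl fun k hk => ?_
      rw [← Finset.sum_mul, s_row k hk]
      simp only [mem_Icc] at hk
      obtain ⟨a, b, ha, hb, hab⟩ : ∃ a b, n + 1 - k = a ∧ k - 1 = b ∧ n = a + b :=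
        ⟨n + 1 - k, k - 1, rfl, rfl, by omega⟩
      rw [ha, hb, hab]
      push_cast; ring
    have Bpart : ∑ l ∈ Icc 1 n, ∑ k ∈ Icc 1 (n+1),
        (if k + l ≤ n + 1 then (1:ℝ) else -1) * β l
        = ∑ k ∈ Icc 1 n, ∑ l ∈ Ioc k n, (β k - β l) := by
      rw [rhs_coeff n β]
      refine Finset.sum_congr rfl fun l hl => ?_
      rw [← Finset.sum_mul, s_col l hl]
      simp only [mem_Icc] at hl
      obtain ⟨a, b, ha, hb, hab, hc⟩ :
          ∃ a b, n - l = a ∧ l - 1 = b ∧ n + 1 - l = a + 1 ∧ n + 1 = a + b + 2 :=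
        ⟨n - l, l - 1, rfl, rfl, by omega, by omega⟩
      rw [ha, hb, hab, show ((n + 1 : ℕ) : ℝ) = ((a + b + 2 : ℕ) : ℝ) by rw [← hc]]
      push_cast; ring
    rw [Tpart, Apart, Bpart, zero_add]
  -- rewrite rfun as a sum of nonnegative terms
  have hr : rfun n t α β
      = ∑ l ∈ Icc 1 n, ∑ k ∈ Icc 1 (n+1),
          (|t + α k + β l| - (if k + l ≤ n + 1 then (1:ℝ) else -1) * (t + α k + β l)) := by
    have : rfun n t α β
        = (∑ l ∈ Icc 1 n, ∑ k ∈ Icc 1 (n + 1), |t + α k + β l|)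
          - ((∑ k ∈ Icc 1 (n+1), ∑ l ∈ Ioc k (n+1), (α k - α l))
            + (∑ k ∈ Icc 1 n, ∑ l ∈ Ioc k n, (β k - β l))) := by
      rw [rfun, hA, hB]; ring
    rw [this, ← key, ← Finset.sum_sub_distrib]
    exact Finset.sum_congr rfl fun l _ => by rw [← Finset.sum_sub_distrib]
  have term_nonneg : ∀ l ∈ Icc 1 n, ∀ k ∈ Icc 1 (n+1),
      0 ≤ |t + α k + β l| - (if k + l ≤ n + 1 then (1:ℝ) else -1) * (t + α k + β l) := by
    intro l _ k _
    split
    · rw [one_mul]; exact sub_nonneg.mpr (le_abs_self _)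
    · rw [neg_one_mul]; exact sub_nonneg.mpr (neg_le_abs _)
  have hiff : rfun n t α β = 0 ↔
      ∀ l ∈ Icc 1 n, ∀ k ∈ Icc 1 (n+1),
        |t + α k + β l| = (if k + l ≤ n + 1 then (1:ℝ) else -1) * (t + α k + β l) := by
    rw [hr, Finset.sum_eq_zero_iff_of_nonneg
      (fun l hl => Finset.sum_nonneg (fun k hk => term_nonneg l hl k hk))]
    refine forall₂_congr fun l hl => ?_
    rw [Finset.sum_eq_zero_iff_of_nonneg (fun k hk => term_nonneg l hl k hk)]
    exact forall₂_congr fun k hk => sub_eq_zero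
  rw [hiff]
  constructor
  · intro h j hj1 hj2
    constructor
    · have h1 := h j (by simp [mem_Icc]; omega) (n + 2 - j) (by simp [mem_Icc]; omega)
      rw [if_neg (by omega), neg_one_mul] at h1
      have := abs_eq_neg_self.mp h1
      linarith
    · have h1 := h j (by simp [mem_Icc]; omega) (n + 1 - j) (by simp [mem_Icc]; omega)
      rw [if_pos (by omega), one_mul] at h1
      have := abs_eq_self.mp h1
      linarith
  · intro h l hl k hk
    simp only [mem_Icc] at hl hk
    obtain ⟨h1, h2⟩ := h l hl.1 hl.2
    by_cases hc : k + l ≤ n + 1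
    · rw [if_pos hc, one_mul]
      have hk' : k ≤ n + 1 - l := by omega
      have hm := hαmono k (n + 1 - l) hk.1 hk' (by omega)
      exact abs_of_nonneg (by linarith)
    · rw [if_neg hc, neg_one_mul]
      have hk' : n + 2 - l ≤ k := by omega
      have hm := hαmono (n + 2 - l) k (by omega) hk' hk.2
      rw [abs_of_nonpos (by linarith)]
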